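/- Let F be a field with char F ≠ 2 and char F ≠ 3, let α₁,α₄ ∈ F, and let A = A₇(α₁,α₄) = [[α₁, 0, 0, α₄],[0, 1-α₁, -α₁, 0]]. Then: (i) if α₄ ≠ 0, the invertible matrices g with gA = A(g⊗g) are exactly [[1,0],[0,±1]], and the only matrix D with DA = A(D⊗I₂ + I₂⊗D) is 0; (ii) if α₄ = 0 and α₁ ≠ 1/3, the automorphism matrices are exactly [[1,0],[0,d]] with d ∈ F, d ≠ 0, and the derivation matrices are exactly [[0,0],[0,d]] with d ∈ F; (iii) if α₄ = 0 and α₁ = 1/3, the automorphism matrices are exactly [[1,0],[c,d]] with c,d ∈ F, d ≠ 0, and the derivation matrices are exactly [[0,0],[c,d]] with c,d ∈ F. -/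
import Mathlib


open Matrix Kronecker

/-- The matrix of structure constants (MSC) of a 2-dimensional algebra, as a
`2 × (2 × 2)` matrix: the column indexed by `(j,k)` corresponds to the product
`e_j · e_k`, so the columns in order `(0,0), (0,1), (1,0), (1,1)` carry the
entries `α₁ α₂ α₃ α₄` (first row) and `β₁ β₂ β₃ β₄` (second row). -/
def MSC {F : Type*} [Field F] (a1 a2 a3 a4 b1 b2 b3 b4 : F) :
    Matrix (Fin 2) (Fin 2 × Fin 2) F :=
  Matrix.of fun i j => !![a1, a2, a3, a4; b1, b2, b3, b4] i (finProdFinEquiv j)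

/-- `g` is an automorphism matrix of the algebra with MSC `A`:
`g` is invertible and `g • A = A • (g ⊗ g)`. -/
def IsAutoMat {F : Type*} [Field F] (A : Matrix (Fin 2) (Fin 2 × Fin 2) F)
    (g : Matrix (Fin 2) (Fin 2) F) : Prop :=
  IsUnit g ∧ g * A = A * (g ⊗ₖ g)

/-- `D` is a derivation matrix of the algebra with MSC `A`:
`D • A = A • (D ⊗ I + I ⊗ D)`. -/
def IsDerMat {F : Type*} [Field F] (A : Matrix (Fin 2) (Fin 2 × Fin 2) F)
    (D : Matrix (Fin 2) (Fin 2) F) : Prop :=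
  D * A = A * (D ⊗ₖ (1 : Matrix (Fin 2) (Fin 2) F) + (1 : Matrix (Fin 2) (Fin 2) F) ⊗ₖ D)

lemma autoKey {F : Type*} [Field F] (a1 a4 : F) (g : Matrix (Fin 2) (Fin 2) F) :
    g * (MSC a1 0 0 a4 0 (1-a1) (-a1) 0) =
      (MSC a1 0 0 a4 0 (1-a1) (-a1) 0) * (g ⊗ₖ g) ↔
    ((g 0 0 * a1 = a1 * (g 0 0 * g 0 0) + a4 * (g 1 0 * g 1 0) ∧
        g 0 1 * (1 - a1) = a1 * (g 0 0 * g 0 1) + a4 * (g 1 0 * g 1 1)) ∧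
      -(g 0 1 * a1) = a1 * (g 0 1 * g 0 0) + a4 * (g 1 1 * g 1 0) ∧
        g 0 0 * a4 = a1 * (g 0 1 * g 0 1) + a4 * (g 1 1 * g 1 1)) ∧
    (g 1 0 * a1 = (1 - a1) * (g 0 0 * g 1 0) + -(a1 * (g 1 0 * g 0 0)) ∧
        g 1 1 * (1 - a1) = (1 - a1) * (g 0 0 * g 1 1) + -(a1 * (g 1 0 * g 0 1))) ∧
      -(g 1 1 * a1) = (1 - a1) * (g 0 1 * g 1 0) + -(a1 * (g 1 1 * g 0 0)) ∧
        g 1 0 * a4 = (1 - a1) * (g 0 1 * g 1 1) + -(a1 * (g 1 1 * g 0 1)) := by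
  rw [← Matrix.ext_iff]
  simp only [Prod.forall, Fin.forall_fin_two]
  simp [MSC, Matrix.mul_apply, Fintype.sum_prod_type, Fin.sum_univ_two,
    Matrix.kroneckerMap_apply, finProdFinEquiv, Fin.divNat, Fin.modNat]

lemma derKey {F : Type*} [Field F] (a1 a4 : F) (D : Matrix (Fin 2) (Fin 2) F) :
    D * (MSC a1 0 0 a4 0 (1-a1) (-a1) 0) =
      (MSC a1 0 0 a4 0 (1-a1) (-a1) 0) *
        (D ⊗ₖ (1 : Matrix (Fin 2) (Fin 2) F)
          + (1 : Matrix (Fin 2) (Fin 2) F) ⊗ₖ D) ↔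
    ((D 0 0 * a1 = a1 * (D 0 0 + D 0 0) ∧ D 0 1 * (1 - a1) = a1 * D 0 1 + a4 * D 1 0) ∧
      -(D 0 1 * a1) = a1 * D 0 1 + a4 * D 1 0 ∧ D 0 0 * a4 = a4 * (D 1 1 + D 1 1)) ∧
    (D 1 0 * a1 = (1 - a1) * D 1 0 + -(a1 * D 1 0) ∧
        D 1 1 * (1 - a1) = (1 - a1) * (D 0 0 + D 1 1)) ∧
      D 1 1 * a1 = a1 * (D 1 1 + D 0 0) ∧ D 1 0 * a4 = (1 - a1) * D 0 1 + -(a1 * D 0 1) := by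
  rw [← Matrix.ext_iff]
  simp only [Prod.forall, Fin.forall_fin_two]
  simp [MSC, Matrix.mul_apply, Fintype.sum_prod_type, Fin.sum_univ_two, Matrix.one_apply,
    Matrix.kroneckerMap_apply, finProdFinEquiv, Fin.divNat, Fin.modNat]

theorem stmt_8 {F : Type*} [Field F] (h2 : ringChar F ≠ 2) (h3 : ringChar F ≠ 3)
    (a1 a4 : F)
    (A : Matrix (Fin 2) (Fin 2 × Fin 2) F)
    (hA : A = MSC a1 0 0 a4 0 (1 - a1) (-a1) 0) :
    (a4 ≠ 0 →
      (∀ g : Matrix (Fin 2) (Fin 2) F,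
        IsAutoMat A g ↔ g = !![1, 0; 0, 1] ∨ g = !![1, 0; 0, -1]) ∧
      (∀ D : Matrix (Fin 2) (Fin 2) F, IsDerMat A D ↔ D = 0)) ∧
    (a4 = 0 → a1 ≠ 1 / 3 →
      (∀ g : Matrix (Fin 2) (Fin 2) F,
        IsAutoMat A g ↔ ∃ d : F, d ≠ 0 ∧ g = !![1, 0; 0, d]) ∧
      (∀ D : Matrix (Fin 2) (Fin 2) F,
        IsDerMat A D ↔ ∃ d : F, D = !![0, 0; 0, d])) ∧
    (a4 = 0 → a1 = 1 / 3 →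
      (∀ g : Matrix (Fin 2) (Fin 2) F,
        IsAutoMat A g ↔ ∃ c d : F, d ≠ 0 ∧ g = !![1, 0; c, d]) ∧
      (∀ D : Matrix (Fin 2) (Fin 2) F,
        IsDerMat A D ↔ ∃ c d : F, D = !![0, 0; c, d])) := by
  subst hA
  have h2' : (2 : F) ≠ 0 := by
    intro h
    have hd : ringChar F ∣ 2 := (CharP.cast_eq_zero_iff F (ringChar F) 2).mp (by exact_mod_cast h)
    rcases (Nat.prime_two.eq_one_or_self_of_dvd _ hd) with h1 | h1
    · exact CharP.char_ne_one F (ringChar F) h1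
    · exact h2 h1
  have h3' : (3 : F) ≠ 0 := by
    intro h
    have hd : ringChar F ∣ 3 := (CharP.cast_eq_zero_iff F (ringChar F) 3).mp (by exact_mod_cast h)
    rcases (Nat.prime_three.eq_one_or_self_of_dvd _ hd) with h1 | h1
    · exact CharP.char_ne_one F (ringChar F) h1
    · exact h3 h1
  -- Generic automorphism analysis
  have autoFwd : ∀ g : Matrix (Fin 2) (Fin 2) F, IsAutoMat (MSC a1 0 0 a4 0 (1 - a1) (-a1) 0) g →
      g 0 1 = 0 ∧ g 0 0 = 1 ∧ g 1 1 ≠ 0 ∧ a4 * (g 1 0 * g 1 1) = 0 ∧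
      g 1 0 * (3 * a1 - 1) = 0 ∧ a4 * ((g 1 1 - 1) * (g 1 1 + 1)) = 0 := by
    rintro g ⟨hu, he⟩
    rw [autoKey] at he
    obtain ⟨⟨⟨e1, e2⟩, e3, e4⟩, ⟨e5, e6⟩, e7, e8⟩ := he
    have hdet : g 0 0 * g 1 1 - g 0 1 * g 1 0 ≠ 0 := by
      rw [← Matrix.det_fin_two]
      exact isUnit_iff_ne_zero.mp ((Matrix.isUnit_iff_isUnit_det g).mp hu)
    have hb : g 0 1 = 0 := by linear_combination e2 - e3
    rw [hb] at e2 e4 e6 e7 hdet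
    have hd : g 1 1 ≠ 0 := by
      intro h; apply hdet; rw [h]; ring
    have ha : g 0 0 = 1 := by
      have had : g 1 1 * (g 0 0 - 1) = 0 := by linear_combination e7 - e6
      rcases mul_eq_zero.mp had with h | h
      · exact absurd h hd
      · exact sub_eq_zero.mp h
    rw [ha] at e2 e4 e5
    refine ⟨hb, ha, hd, ?_, ?_, ?_⟩
    · linear_combination -e2
    · linear_combination e5
    · linear_combination -e4
  -- Generic derivation analysis
  have derFwd : ∀ D : Matrix (Fin 2) (Fin 2) F, IsDerMat (MSC a1 0 0 a4 0 (1 - a1) (-a1) 0) D →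
      D 0 1 = 0 ∧ D 0 0 = 0 ∧ a4 * D 1 0 = 0 ∧ a4 * D 1 1 = 0 ∧ D 1 0 * (3 * a1 - 1) = 0 := by
    intro D he
    rw [IsDerMat, derKey] at he
    obtain ⟨⟨⟨e1, e2⟩, e3, e4⟩, ⟨e5, e6⟩, e7, e8⟩ := he
    have hb : D 0 1 = 0 := by linear_combination e2 - e3
    have ha : D 0 0 = 0 := by linear_combination -e6 - e7
    rw [hb] at e3
    rw [ha] at e4
    refine ⟨hb, ha, by linear_combination -e3, ?_, by linear_combination e5⟩
    have h24 : 2 * (a4 * D 1 1) = 0 := by linear_combination -e4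
    rcases mul_eq_zero.mp h24 with h | h
    · exact absurd h h2'
    · exact h
  refine ⟨?_, ?_, ?_⟩
  · -- case a4 ≠ 0
    intro ha4
    constructor
    · intro g
      constructor
      · intro hg
        obtain ⟨hb, ha, hd, hcd, hc3, hdd⟩ := autoFwd g hg
        have hc : g 1 0 = 0 := by
          rcases mul_eq_zero.mp hcd with h | h
          · exact absurd h ha4
          · rcases mul_eq_zero.mp h with h' | h'
            · exact h'
            · exact absurd h' hd
        have hd2 : g 1 1 = 1 ∨ g 1 1 = -1 := by
          rcases mul_eq_zero.mp hdd with h | h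
          · exact absurd h ha4
          · rcases mul_eq_zero.mp h with h' | h'
            · left; exact sub_eq_zero.mp h'
            · right; exact eq_neg_of_add_eq_zero_left h'
        rcases hd2 with h | h
        · left; ext i j; fin_cases i <;> fin_cases j <;> simp [ha, hb, hc, h]
        · right; ext i j; fin_cases i <;> fin_cases j <;> simp [ha, hb, hc, h]
      · rintro (rfl | rfl) <;> constructor
        · exact (Matrix.isUnit_iff_isUnit_det _).mpr (by simp)
        · rw [autoKey]; norm_num
        · exact (Matrix.isUnit_iff_isUnit_det _).mpr (by simp)
        · rw [autoKey]; norm_num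
    · intro D
      constructor
      · intro hD
        obtain ⟨hb, ha, hc', hd', _⟩ := derFwd D hD
        have hc : D 1 0 = 0 := by
          rcases mul_eq_zero.mp hc' with h | h
          · exact absurd h ha4
          · exact h
        have hd : D 1 1 = 0 := by
          rcases mul_eq_zero.mp hd' with h | h
          · exact absurd h ha4
          · exact h
        ext i j; fin_cases i <;> fin_cases j <;> simp [ha, hb, hc, hd]
      · rintro rfl
        rw [IsDerMat, derKey]; norm_num
  · -- case a4 = 0, a1 ≠ 1/3
    rintro rfl ha1
    have h31 : 3 * a1 - 1 ≠ 0 := by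
      intro h
      apply ha1
      field_simp
      linear_combination h
    constructor
    · intro g
      constructor
      · intro hg
        obtain ⟨hb, ha, hd, _, hc3, _⟩ := autoFwd g hg
        have hc : g 1 0 = 0 := by
          rcases mul_eq_zero.mp hc3 with h | h
          · exact h
          · exact absurd h h31
        exact ⟨g 1 1, hd, by ext i j; fin_cases i <;> fin_cases j <;> simp [ha, hb, hc]⟩
      · rintro ⟨d, hd, rfl⟩
        constructor
        · exact (Matrix.isUnit_iff_isUnit_det _).mpr (by simpa using isUnit_iff_ne_zero.mpr hd)
        · rw [autoKey]; norm_num; exact ⟨by ring, by ring⟩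
    · intro D
      constructor
      · intro hD
        obtain ⟨hb, ha, _, _, hc3⟩ := derFwd D hD
        have hc : D 1 0 = 0 := by
          rcases mul_eq_zero.mp hc3 with h | h
          · exact h
          · exact absurd h h31
        exact ⟨D 1 1, by ext i j; fin_cases i <;> fin_cases j <;> simp [ha, hb, hc]⟩
      · rintro ⟨d, rfl⟩
        rw [IsDerMat, derKey]; norm_num; exact ⟨by ring, by ring⟩
  · -- case a4 = 0, a1 = 1/3
    rintro rfl rfl
    constructor
    · intro g
      constructor
      · intro hg
        obtain ⟨hb, ha, hd, _, _, _⟩ := autoFwd g hg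
        exact ⟨g 1 0, g 1 1, hd, by ext i j; fin_cases i <;> fin_cases j <;> simp [ha, hb]⟩
      · rintro ⟨c, d, hd, rfl⟩
        constructor
        · exact (Matrix.isUnit_iff_isUnit_det _).mpr (by simpa using isUnit_iff_ne_zero.mpr hd)
        · rw [autoKey]; norm_num
          repeat' apply And.intro
          all_goals first | trivial | ring1 | (field_simp; ring1)
    · intro D
      constructor
      · intro hD
        obtain ⟨hb, ha, _, _, _⟩ := derFwd D hD
        exact ⟨D 1 0, D 1 1, by ext i j; fin_cases i <;> fin_cases j <;> simp [ha, hb]⟩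
      · rintro ⟨c, d, rfl⟩
        rw [IsDerMat, derKey]; norm_num
        repeat' apply And.intro
        all_goals first | trivial | ring1 | (field_simp; ring1)
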